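/- For any r ∈ [n+1] and any partition {U_1, U_2} of [n+2] \ {r, r+1}, the quantity T^c of the three-tier complete tiered graph CT(U_1, {r}, U_2) satisfies T^c_{CT(U_1,{r},U_2)}(y) = T^c_{CT(U_1∪{r}, U_2∪{r+1})}(y) − T^c_{CT(U_1∪{r+1}, U_2∪{r})}(y), where T^c_G(y) = T_G(1, y) if G is connected and 0 otherwise. -/

import Mathlib

open Finset

attribute [local instance 10] Classical.propDecidable

noncomputable section

/-- An edge of a simple graph on `ℕ`, stored as an ordered pair `(u,v)` with `u < v` intended. -/
abbrev PEdge : Type := ℕ × ℕ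

/-- A labelled edge (for multigraphs): an endpoint pair together with a label. -/
abbrev LEdge : Type := (ℕ × ℕ) × ℕ

def adjP (E : Finset PEdge) (u v : ℕ) : Prop := (u, v) ∈ E ∨ (v, u) ∈ E

def reachP (E : Finset PEdge) : ℕ → ℕ → Prop := Relation.ReflTransGen (adjP E)

def connP (V : Finset ℕ) (E : Finset PEdge) : Prop :=
  (∀ e ∈ E, e.1 ∈ V ∧ e.2 ∈ V) ∧ ∀ u ∈ V, ∀ v ∈ V, reachP E u v

def IsTreeOn (V : Finset ℕ) (E : Finset PEdge) : Prop := connP V E ∧ E.card + 1 = V.card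

/-- A graph on a finite set of naturals together with a tiering map. -/
structure PreGraph where
  V : Finset ℕ
  E : Finset PEdge
  t : ℕ → ℕ

/-- `G` is a tiered graph with two tiers. -/
def IsTiered (G : PreGraph) : Prop :=
  (∀ v ∈ G.V, 0 < v) ∧
  (∀ e ∈ G.E, e.1 ∈ G.V ∧ e.2 ∈ G.V ∧ e.1 < e.2) ∧
  (∀ v ∈ G.V, G.t v = 1 ∨ G.t v = 2) ∧
  (∀ e ∈ G.E, G.t e.1 < G.t e.2)

/-- acyclicity: every edge is a bridge. -/
def IsForest (G : PreGraph) : Prop := ∀ e ∈ G.E, ¬ reachP (G.E.erase e) e.1 e.2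

def IsTreeG (G : PreGraph) : Prop := IsTreeOn G.V G.E

/-- the connected component (vertex set) of `x`. -/
def comp (V : Finset ℕ) (E : Finset PEdge) (x : ℕ) : Finset ℕ :=
  V.filter fun y => reachP E x y

/-- the order-reversing involution `x_i ↦ x_{s+1-i}` of a finite set `V = {x_1 < ... < x_s}`. -/
def flipMap (V : Finset ℕ) (x : ℕ) : ℕ :=
  if hx : x ∈ V then
    ((V.orderIsoOfFin rfl)
      ⟨V.card - 1 - ((V.orderIsoOfFin rfl).symm ⟨x, hx⟩).1, by
        have h := ((V.orderIsoOfFin rfl).symm ⟨x, hx⟩).isLt; omega⟩).1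
  else x

/-- the dual of a (connected) tiered graph, via the global vertex ordering. -/
def dual (G : PreGraph) : PreGraph where
  V := G.V
  E := G.E.image fun e => (flipMap G.V e.2, flipMap G.V e.1)
  t := fun x => if x ∈ G.V then 3 - G.t (flipMap G.V x) else G.t x

/-- the componentwise dual of a (possibly disconnected) tiered graph. -/
def cdual (G : PreGraph) : PreGraph where
  V := G.V
  E := G.E.image fun e => (flipMap (comp G.V G.E e.1) e.2, flipMap (comp G.V G.E e.1) e.1)
  t := fun x => if x ∈ G.V then 3 - G.t (flipMap (comp G.V G.E x) x) else G.t x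

/-- the recursive weight of a tiered tree (fuel-based implementation; the recursion
depth is bounded by the number of vertices). -/
def weightAux : ℕ → PreGraph → ℕ
  | 0, _ => 0
  | fuel + 1, T =>
    if h : 2 ≤ T.V.card then
      let v := T.V.min' (Finset.card_pos.mp (by omega))
      let V' := T.V.erase v
      let E' := T.E.filter fun e => e.1 ≠ v ∧ e.2 ≠ v
      ∑ u ∈ V'.filter (fun u => adjP T.E v u),
        (((comp V' E' u).filter fun y => y < u ∧ T.t v < T.t y).card
          + weightAux fuel ⟨comp V' E' u, E'.filter fun e => e.1 ∈ comp V' E' u, T.t⟩)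
    else 0

def weight (T : PreGraph) : ℕ := weightAux T.V.card T

/-- edges of a complete tiered graph with tier 1 vertex set `A` and tier 2 vertex set `B`. -/
def ctE2 (A B : Finset ℕ) : Finset PEdge := (A ×ˢ B).filter fun e => e.1 < e.2

/-- the edge set of the complete tiered graph determined by a two-tier tiered graph `G`. -/
def ctE (G : PreGraph) : Finset PEdge :=
  ctE2 (G.V.filter fun v => G.t v = 1) (G.V.filter fun v => G.t v = 2)

/-- edge set of the complete tiered graph on `[n]` determined by a tiering map `t`. -/
def ctEM (n : ℕ) (t : ℕ → ℕ) : Finset PEdge :=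
  (Finset.Icc 1 n ×ˢ Finset.Icc 1 n).filter fun e => e.1 < e.2 ∧ t e.1 < t e.2

def extActiveP (T : Finset PEdge) (ω : PEdge → ℝ) (e : PEdge) : Prop :=
  e ∉ T ∧ reachP T e.1 e.2 ∧ ∀ e' ∈ T, ¬ reachP (T.erase e') e.1 e.2 → ω e < ω e'

/-- external activity of the spanning forest `T` in the graph with edge set `E`. -/
def eaP (E T : Finset PEdge) (ω : PEdge → ℝ) : ℕ := (E.filter (extActiveP T ω)).card

def adjL (E : Finset LEdge) (u v : ℕ) : Prop := ∃ e ∈ E, e.1 = (u, v) ∨ e.1 = (v, u)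
def reachL (E : Finset LEdge) : ℕ → ℕ → Prop := Relation.ReflTransGen (adjL E)
def connL (V : Finset ℕ) (E : Finset LEdge) : Prop := ∀ u ∈ V, ∀ v ∈ V, reachL E u v
def IsLTree (V : Finset ℕ) (T : Finset LEdge) : Prop := connL V T ∧ T.card + 1 = V.card

def extActiveL (T : Finset LEdge) (ω : LEdge → ℝ) (e : LEdge) : Prop :=
  e ∉ T ∧ reachL T e.1.1 e.1.2 ∧ ∀ e' ∈ T, ¬ reachL (T.erase e') e.1.1 e.1.2 → ω e < ω e'

def eaL (E T : Finset LEdge) (ω : LEdge → ℝ) : ℕ := (E.filter (extActiveL T ω)).card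

def omega1 (N : ℕ) (e : PEdge) : ℝ := (e.1 : ℝ) + (e.2 : ℝ) / (N : ℝ)
def omega2 (N : ℕ) (e : PEdge) : ℝ := ((N + 1 - e.2 : ℕ) : ℝ) + ((N + 1 - e.1 : ℕ) : ℝ) / (N : ℝ)
def omegaLex (n : ℕ) (e : PEdge) : ℝ := ((e.1 * (n + 1) + e.2 : ℕ) : ℝ)

/-- representative (minimum) of the component of `x` in the forest `F` on vertex set `V`. -/
def rep (V : Finset ℕ) (F : Finset LEdge) (x : ℕ) : ℕ :=
  if hx : x ∈ V then
    (V.filter fun y => reachL F x y).min'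
      ⟨x, Finset.mem_filter.mpr ⟨hx, Relation.ReflTransGen.refl⟩⟩
  else x

/-- image of an edge in the quotient graph `G • F`; the label encodes the original edge. -/
def quotEdge (ρ : ℕ → ℕ) (e : LEdge) : LEdge :=
  ((ρ e.1.1, ρ e.1.2), Nat.pair (Nat.pair e.1.1 e.1.2) e.2)

/-- recover the original edge from a quotient edge. -/
def decodeE (e : LEdge) : LEdge :=
  (((Nat.unpair (Nat.unpair e.2).1).1, (Nat.unpair (Nat.unpair e.2).1).2), (Nat.unpair e.2).2)

/-- tiering map on `[n]` induced by `f : Fin n → Fin m` (tiers `1,...,m`). -/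
def tf (n m : ℕ) (f : Fin n → Fin m) : ℕ → ℕ := fun v =>
  if h : v ∈ Finset.Icc 1 n then
    (f ⟨v - 1, by have := Finset.mem_Icc.mp h; omega⟩).1 + 1
  else 0

/-- `G` is a tiered graph with `m` tiers. -/
def IsTieredM (m : ℕ) (G : PreGraph) : Prop :=
  (∀ e ∈ G.E, e.1 ∈ G.V ∧ e.2 ∈ G.V ∧ e.1 < e.2) ∧
  (∀ v ∈ G.V, G.t v ∈ Finset.Icc 1 m) ∧
  (∀ e ∈ G.E, G.t e.1 < G.t e.2) ∧
  (∀ i ∈ Finset.Icc 1 m, ∃ v ∈ G.V, G.t v = i)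

/-- weight polynomial `P_p(q)` (recursive weight), evaluated at `q`. -/
def Pw (n m : ℕ) (p : ℕ → ℕ) (q : ℤ) : ℤ :=
  ∑ f : Fin n → Fin m,
    ∑ E ∈ ((Finset.Icc 1 n ×ˢ Finset.Icc 1 n).powerset.filter fun E =>
        IsTreeG ⟨Finset.Icc 1 n, E, tf n m f⟩ ∧ IsTieredM m ⟨Finset.Icc 1 n, E, tf n m f⟩ ∧
        ∀ i ∈ Finset.Icc 1 m, ((Finset.Icc 1 n).filter fun v => tf n m f v = i).card = p i),
      q ^ weight ⟨Finset.Icc 1 n, E, tf n m f⟩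

/-- weight polynomial `P_p(q)` with the weight of a tiered tree given by its external
activity in the complete tiered graph it determines (lexicographic edge order). -/
def PwEA (n m : ℕ) (p : ℕ → ℕ) (q : ℤ) : ℤ :=
  ∑ f : Fin n → Fin m,
    ∑ E ∈ ((Finset.Icc 1 n ×ˢ Finset.Icc 1 n).powerset.filter fun E =>
        IsTreeG ⟨Finset.Icc 1 n, E, tf n m f⟩ ∧ IsTieredM m ⟨Finset.Icc 1 n, E, tf n m f⟩ ∧
        ∀ i ∈ Finset.Icc 1 m, ((Finset.Icc 1 n).filter fun v => tf n m f v = i).card = p i),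
      q ^ eaP (ctEM n (tf n m f)) E (omegaLex n)

/-- `T^c_G(y)`: the Tutte evaluation `T_G(1,y)` (spanning tree expansion) for a connected
graph, `0` otherwise. -/
def TcP (V : Finset ℕ) (E : Finset PEdge) (ω : PEdge → ℝ) (y : ℤ) : ℤ :=
  if connP V E then ∑ T ∈ E.powerset.filter (fun T => IsTreeOn V T), y ^ eaP E T ω else 0

/-- edge multiset of `H ∪ Q_S`: `H`-edges (labels `≠ 0`) together with the complete
tiered graph on `U` with tier-1 set `S` (labelled `0`). -/
def qE (U : Finset ℕ) (EH : Finset LEdge) (S : Finset ℕ) : Finset LEdge :=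
  EH ∪ (ctE2 S (U \ S)).image fun p => (p, 0)

/-- `(S,T) ↦ (S*, T*)`: the dual quasi-tiered tree. -/
def dualTree (U : Finset ℕ) (ST : Finset ℕ × Finset LEdge) : Finset ℕ × Finset LEdge :=
  (U.filter fun v =>
      (cdual ⟨U, (ST.2.filter fun e => e.2 = 0).image Prod.fst,
        fun w => if w ∈ ST.1 then 1 else 2⟩).t v = 1,
   (ST.2.filter fun e => e.2 ≠ 0) ∪
     (cdual ⟨U, (ST.2.filter fun e => e.2 = 0).image Prod.fst,
        fun w => if w ∈ ST.1 then 1 else 2⟩).E.image fun p => (p, 0))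

/-- tiered forests on `U` with tier sizes `(p1, p2)` (tier map normalised off `U`). -/
def ForestSet (U : Finset ℕ) (p1 p2 : ℕ) : Set PreGraph :=
  {F | F.V = U ∧ IsTiered F ∧ IsForest F ∧
    (U.filter fun v => F.t v = 1).card = p1 ∧
    (U.filter fun v => F.t v = 2).card = p2 ∧
    ∀ v, v ∉ U → F.t v = 0}

/-! ### Auxiliary reachability lemmas -/

theorem adjP_symm {E : Finset PEdge} {u v : ℕ} (h : adjP E u v) : adjP E v u := h.symm

theorem reach_symm {E : Finset PEdge} {u v : ℕ} (h : reachP E u v) : reachP E v u :=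
  haveI : Std.Symm (adjP E) := ⟨fun _ _ h => h.symm⟩
  (inferInstance : Std.Symm (Relation.ReflTransGen (adjP E))).symm _ _ h

theorem reach_mono {E F : Finset PEdge} (hEF : E ⊆ F) {u v : ℕ} (h : reachP E u v) :
    reachP F u v := by
  refine Relation.ReflTransGen.mono ?_ u v h
  intro a b hab
  exact hab.imp (fun h => hEF h) (fun h => hEF h)

theorem reach_adj {E : Finset PEdge} {u v : ℕ} (h : adjP E u v) : reachP E u v :=
  Relation.ReflTransGen.single h

theorem mem_edge_reach {E : Finset PEdge} {e : PEdge} (he : e ∈ E) : reachP E e.1 e.2 :=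
  reach_adj (Or.inl he)

theorem reach_empty {u v : ℕ} (h : reachP (∅ : Finset PEdge) u v) : u = v := by
  induction h with
  | refl => rfl
  | tail h1 h2 ih => rcases h2 with h | h <;> simp at h

/-- decomposition of a walk with respect to a possibly used edge `e`. -/
theorem reach_erase_decomp {E : Finset PEdge} {e : PEdge} {u v : ℕ} (h : reachP E u v) :
    reachP (E.erase e) u v ∨
      (reachP (E.erase e) u e.1 ∧ reachP (E.erase e) e.2 v) ∨
      (reachP (E.erase e) u e.2 ∧ reachP (E.erase e) e.1 v) := by
  induction h with
  | refl => exact Or.inl Relation.ReflTransGen.refl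
  | @tail b c h1 h2 ih =>
    by_cases hbc : adjP (E.erase e) b c
    · rcases ih with h | ⟨h, h'⟩ | ⟨h, h'⟩
      · exact Or.inl (h.tail hbc)
      · exact Or.inr (Or.inl ⟨h, h'.tail hbc⟩)
      · exact Or.inr (Or.inr ⟨h, h'.tail hbc⟩)
    · -- the step uses the edge `e`
      have hbc' : (b, c) = e ∨ (c, b) = e := by
        rcases h2 with h2 | h2
        · left
          by_contra hne
          exact hbc (Or.inl (Finset.mem_erase.mpr ⟨hne, h2⟩))
        · right
          by_contra hne
          exact hbc (Or.inr (Finset.mem_erase.mpr ⟨hne, h2⟩))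
      have hb : (b = e.1 ∧ c = e.2) ∨ (b = e.2 ∧ c = e.1) := by
        rcases hbc' with h | h
        · left; rw [← h]; exact ⟨rfl, rfl⟩
        · right; rw [← h]; exact ⟨rfl, rfl⟩
      rcases hb with ⟨hb, hc⟩ | ⟨hb, hc⟩ <;> subst hb <;> subst hc
      · rcases ih with h | ⟨h, h'⟩ | ⟨h, h'⟩
        · exact Or.inr (Or.inl ⟨h, Relation.ReflTransGen.refl⟩)
        · exact Or.inr (Or.inl ⟨h, Relation.ReflTransGen.refl⟩)
        · exact Or.inl h
      · rcases ih with h | ⟨h, h'⟩ | ⟨h, h'⟩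
        · exact Or.inr (Or.inr ⟨h, Relation.ReflTransGen.refl⟩)
        · exact Or.inl h
        · exact Or.inr (Or.inr ⟨h, Relation.ReflTransGen.refl⟩)

theorem reach_erase_of_detour {E : Finset PEdge} {e : PEdge} {u v : ℕ}
    (hd : reachP (E.erase e) e.1 e.2) (h : reachP E u v) : reachP (E.erase e) u v := by
  rcases reach_erase_decomp (e := e) h with h | ⟨h, h'⟩ | ⟨h, h'⟩
  · exact h
  · exact (h.trans hd).trans h'
  · exact (h.trans (reach_symm hd)).trans h'

theorem connP_erase {V : Finset ℕ} {E : Finset PEdge} {e : PEdge}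
    (hc : connP V E) (hd : reachP (E.erase e) e.1 e.2) : connP V (E.erase e) := by
  refine ⟨fun g hg => hc.1 g (Finset.mem_of_mem_erase hg), fun u hu v hv => ?_⟩
  exact reach_erase_of_detour hd (hc.2 u hu v hv)

/-- a walk starting in the component of `x` stays in edges incident to that component. -/
theorem reach_restrict {E : Finset PEdge} {x u v : ℕ}
    (hu : reachP E x u) (h : reachP E u v) :
    reachP (E.filter fun g => reachP E x g.1) u v := by
  induction h with
  | refl => exact Relation.ReflTransGen.refl
  | @tail b c h1 h2 ih =>
    have hxb : reachP E x b := hu.trans h1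
    have hmem : ∀ g : PEdge, g ∈ E → ((b, c) = g ∨ (c, b) = g) →
        g ∈ E.filter fun g => reachP E x g.1 := by
      intro g hg hbc
      refine Finset.mem_filter.mpr ⟨hg, ?_⟩
      rcases hbc with h | h <;> rw [← h]
      · exact hxb
      · exact hxb.tail h2
    refine ih.tail ?_
    rcases h2 with h | h
    · exact Or.inl (hmem _ h (Or.inl rfl))
    · exact Or.inr (hmem _ h (Or.inr rfl))

theorem conn_card {V : Finset ℕ} {E : Finset PEdge}
    (hc : connP V E) (hV : V.Nonempty) : V.card ≤ E.card + 1 := by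
  suffices H : ∀ n (V : Finset ℕ) (E : Finset PEdge), E.card = n → connP V E → V.Nonempty →
      V.card ≤ E.card + 1 from H _ V E rfl hc hV
  clear hc hV V E
  intro n
  induction n using Nat.strong_induction_on with
  | _ n ih =>
  intro V E hn hc hV
  subst hn
  by_cases hcyc : ∃ e ∈ E, reachP (E.erase e) e.1 e.2
  · obtain ⟨e, he, hd⟩ := hcyc
    have h1 := ih (E.erase e).card (Finset.card_lt_card (Finset.erase_ssubset he))
      V (E.erase e) rfl (connP_erase hc hd) hV
    have h2 : (E.erase e).card ≤ E.card := Finset.card_le_card (Finset.erase_subset _ _)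
    omega
  · push_neg at hcyc
    rcases Finset.eq_empty_or_nonempty E with rfl | ⟨e, he⟩
    · -- no edges: V is a single vertex
      obtain ⟨v, hv⟩ := hV
      have : ∀ u ∈ V, u = v := fun u hu => reach_empty (hc.2 u hu v hv)
      have : V ⊆ {v} := fun u hu => Finset.mem_singleton.mpr (this u hu)
      have := Finset.card_le_card this
      simp at this ⊢; omega
    · -- acyclic case: split along the bridge `e`
      set E' := E.erase e with hE'
      have hne : ¬ reachP E' e.1 e.2 := hcyc e he
      set V1 := V.filter (fun y => reachP E' e.1 y) with hV1
      set V2 := V.filter (fun y => reachP E' e.2 y) with hV2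
      set E1 := E'.filter (fun g => reachP E' e.1 g.1) with hE1
      set E2 := E'.filter (fun g => reachP E' e.2 g.1) with hE2
      have he1V : e.1 ∈ V := (hc.1 e he).1
      have he2V : e.2 ∈ V := (hc.1 e he).2
      have hV12 : ∀ v ∈ V, v ∈ V1 ∨ v ∈ V2 := by
        intro v hv
        have := hc.2 e.1 he1V v hv
        rcases reach_erase_decomp (e := e) this with h | ⟨h, h'⟩ | ⟨h, h'⟩
        · exact Or.inl (Finset.mem_filter.mpr ⟨hv, h⟩)
        · exact Or.inr (Finset.mem_filter.mpr ⟨hv, h'⟩)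
        · exact Or.inl (Finset.mem_filter.mpr ⟨hv, h'⟩)
      have hdisj12 : Disjoint V1 V2 := by
        rw [Finset.disjoint_left]
        intro a h1 h2
        exact hne ((Finset.mem_filter.mp h1).2.trans
          (reach_symm (Finset.mem_filter.mp h2).2))
      have hVcard : V1.card + V2.card = (V1 ∪ V2).card := (Finset.card_union_of_disjoint hdisj12).symm
      have hVun : V1 ∪ V2 = V := by
        apply Finset.Subset.antisymm
        · exact Finset.union_subset (Finset.filter_subset _ _) (Finset.filter_subset _ _)
        · intro v hv; rcases hV12 v hv with h | h
          · exact Finset.mem_union_left _ h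
          · exact Finset.mem_union_right _ h
      -- connectivity of the two halves
      have hcompconn : ∀ x : ℕ, x ∈ V →
          connP (V.filter (fun y => reachP E' x y)) (E'.filter (fun g => reachP E' x g.1)) := by
        intro x hx
        constructor
        · intro g hg
          obtain ⟨hgE', hgx⟩ := Finset.mem_filter.mp hg
          have hgE : g ∈ E := Finset.mem_of_mem_erase hgE'
          refine ⟨Finset.mem_filter.mpr ⟨(hc.1 g hgE).1, hgx⟩,
            Finset.mem_filter.mpr ⟨(hc.1 g hgE).2, hgx.tail (Or.inl hgE')⟩⟩
        · intro u hu v hv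
          obtain ⟨huV, hxu⟩ := Finset.mem_filter.mp hu
          obtain ⟨hvV, hxv⟩ := Finset.mem_filter.mp hv
          exact reach_restrict hxu ((reach_symm hxu).trans hxv)
      have hc1 := hcompconn e.1 he1V
      have hc2 := hcompconn e.2 he2V
      have hn1 : V1.Nonempty := ⟨e.1, Finset.mem_filter.mpr ⟨he1V, Relation.ReflTransGen.refl⟩⟩
      have hn2 : V2.Nonempty := ⟨e.2, Finset.mem_filter.mpr ⟨he2V, Relation.ReflTransGen.refl⟩⟩
      have hE1s : E1 ⊆ E' := Finset.filter_subset _ _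
      have hE2s : E2 ⊆ E' := Finset.filter_subset _ _
      have hE'c : E'.card < E.card := Finset.card_lt_card (Finset.erase_ssubset he)
      have h1 := ih E1.card (lt_of_le_of_lt (Finset.card_le_card hE1s) hE'c) V1 E1 rfl hc1 hn1
      have h2 := ih E2.card (lt_of_le_of_lt (Finset.card_le_card hE2s) hE'c) V2 E2 rfl hc2 hn2
      have hdisjE : Disjoint E1 E2 := by
        rw [Finset.disjoint_left]
        intro g hg1 hg2
        exact hne ((Finset.mem_filter.mp hg1).2.trans
          (reach_symm (Finset.mem_filter.mp hg2).2))
      have : E1.card + E2.card ≤ E'.card := by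
        rw [← Finset.card_union_of_disjoint hdisjE]
        exact Finset.card_le_card (Finset.union_subset hE1s hE2s)
      have hVc : V.card = V1.card + V2.card := by rw [hVcard, hVun]
      have : E'.card + 1 = E.card := by rw [hE', Finset.card_erase_of_mem he]; omega
      omega

theorem tree_acyclic {V : Finset ℕ} {T : Finset PEdge} (hT : IsTreeOn V T) :
    ∀ e ∈ T, ¬ reachP (T.erase e) e.1 e.2 := by
  intro e he hd
  have hc' : connP V (T.erase e) := connP_erase hT.1 hd
  have hV : V.Nonempty := Finset.card_pos.mp (by have := hT.2; omega)
  have := conn_card hc' hV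
  have h1 : (T.erase e).card + 1 = T.card := by
    rw [Finset.card_erase_of_mem he]
    have : 0 < T.card := Finset.card_pos.mpr ⟨e, he⟩
    omega
  have := hT.2
  omega

/-- existence of a minimal connecting subset. -/
theorem exists_min_connector {E : Finset PEdge} {u v : ℕ} (h : reachP E u v) :
    ∃ S ⊆ E, reachP S u v ∧ ∀ e ∈ S, ¬ reachP (S.erase e) u v := by
  suffices H : ∀ n (E : Finset PEdge), E.card = n → reachP E u v →
      ∃ S ⊆ E, reachP S u v ∧ ∀ e ∈ S, ¬ reachP (S.erase e) u v from H _ E rfl h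
  clear h E
  intro n
  induction n using Nat.strong_induction_on with
  | _ n ih =>
  intro E hn h
  subst hn
  by_cases hred : ∃ e ∈ E, reachP (E.erase e) u v
  · obtain ⟨e, he, hd⟩ := hred
    obtain ⟨S, hS1, hS2, hS3⟩ := ih (E.erase e).card
      (Finset.card_lt_card (Finset.erase_ssubset he)) (E.erase e) rfl hd
    exact ⟨S, hS1.trans (Finset.erase_subset _ _), hS2, hS3⟩
  · push_neg at hred
    exact ⟨E, Finset.Subset.refl _, h, hred⟩

theorem essential_mem_connector {T S : Finset PEdge} {u v : ℕ} {e : PEdge}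
    (hS : S ⊆ T) (hr : reachP S u v) (he : ¬ reachP (T.erase e) u v) : e ∈ S := by
  by_contra hne
  refine he (reach_mono (fun g hg => Finset.mem_erase.mpr ⟨?_, hS hg⟩) hr)
  rintro rfl; exact hne hg

/-- in an acyclic graph, each edge of a minimal connector is essential. -/
theorem connector_essential {T S : Finset PEdge} {u v : ℕ} {e : PEdge}
    (hacyc : ∀ g ∈ T, ¬ reachP (T.erase g) g.1 g.2)
    (hS : S ⊆ T) (hmin : ∀ g ∈ S, ¬ reachP (S.erase g) u v)
    (hr : reachP S u v) (he : e ∈ S) : ¬ reachP (T.erase e) u v := by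
  intro hTr
  have hSe : S.erase e ⊆ T.erase e := fun g hg =>
    Finset.mem_erase.mpr ⟨(Finset.mem_erase.mp hg).1, hS (Finset.mem_erase.mp hg).2⟩
  rcases reach_erase_decomp (e := e) hr with h | ⟨h, h'⟩ | ⟨h, h'⟩
  · exact hmin e he h
  · exact hacyc e (hS he) (((reach_symm (reach_mono hSe h)).trans hTr).trans
      (reach_symm (reach_mono hSe h')))
  · exact hacyc e (hS he) (reach_symm (((reach_symm (reach_mono hSe h)).trans hTr).trans
      (reach_symm (reach_mono hSe h'))))

/-- a connected acyclic graph has exactly `|V| - 1` edges. -/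
theorem acyclic_conn_card {V : Finset ℕ} {E : Finset PEdge}
    (hc : connP V E) (hV : V.Nonempty)
    (hacyc : ∀ g ∈ E, ¬ reachP (E.erase g) g.1 g.2) : E.card + 1 = V.card := by
  suffices H : ∀ n (V : Finset ℕ) (E : Finset PEdge), E.card = n → connP V E → V.Nonempty →
      (∀ g ∈ E, ¬ reachP (E.erase g) g.1 g.2) → E.card + 1 = V.card from
    H _ V E rfl hc hV hacyc
  clear hc hV hacyc V E
  intro n
  induction n using Nat.strong_induction_on with
  | _ n ih =>
  intro V E hn hc hV hacyc
  subst hn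
  rcases Finset.eq_empty_or_nonempty E with rfl | ⟨e, he⟩
  · obtain ⟨v, hv⟩ := hV
    have h1 : ∀ u ∈ V, u = v := fun u hu => reach_empty (hc.2 u hu v hv)
    have h2 : V ⊆ {v} := fun u hu => Finset.mem_singleton.mpr (h1 u hu)
    have h3 : V = {v} := Finset.Subset.antisymm h2 (Finset.singleton_subset_iff.mpr hv)
    simp [h3]
  · set E' := E.erase e with hE'
    have hne : ¬ reachP E' e.1 e.2 := hacyc e he
    set V1 := V.filter (fun y => reachP E' e.1 y) with hV1
    set V2 := V.filter (fun y => reachP E' e.2 y) with hV2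
    set E1 := E'.filter (fun g => reachP E' e.1 g.1) with hE1
    set E2 := E'.filter (fun g => reachP E' e.2 g.1) with hE2
    have he1V : e.1 ∈ V := (hc.1 e he).1
    have he2V : e.2 ∈ V := (hc.1 e he).2
    have hV12 : ∀ v ∈ V, v ∈ V1 ∨ v ∈ V2 := by
      intro v hv
      have := hc.2 e.1 he1V v hv
      rcases reach_erase_decomp (e := e) this with h | ⟨h, h'⟩ | ⟨h, h'⟩
      · exact Or.inl (Finset.mem_filter.mpr ⟨hv, h⟩)
      · exact Or.inr (Finset.mem_filter.mpr ⟨hv, h'⟩)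
      · exact Or.inl (Finset.mem_filter.mpr ⟨hv, h'⟩)
    have hdisj12 : Disjoint V1 V2 := by
      rw [Finset.disjoint_left]
      intro a h1 h2
      exact hne ((Finset.mem_filter.mp h1).2.trans (reach_symm (Finset.mem_filter.mp h2).2))
    have hVun : V1 ∪ V2 = V := by
      apply Finset.Subset.antisymm
      · exact Finset.union_subset (Finset.filter_subset _ _) (Finset.filter_subset _ _)
      · intro v hv; rcases hV12 v hv with h | h
        · exact Finset.mem_union_left _ h
        · exact Finset.mem_union_right _ h
    have hcompconn : ∀ x : ℕ, x ∈ V →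
        connP (V.filter (fun y => reachP E' x y)) (E'.filter (fun g => reachP E' x g.1)) := by
      intro x hx
      constructor
      · intro g hg
        obtain ⟨hgE', hgx⟩ := Finset.mem_filter.mp hg
        have hgE : g ∈ E := Finset.mem_of_mem_erase hgE'
        refine ⟨Finset.mem_filter.mpr ⟨(hc.1 g hgE).1, hgx⟩,
          Finset.mem_filter.mpr ⟨(hc.1 g hgE).2, hgx.tail (Or.inl hgE')⟩⟩
      · intro u hu v hv
        obtain ⟨huV, hxu⟩ := Finset.mem_filter.mp hu
        obtain ⟨hvV, hxv⟩ := Finset.mem_filter.mp hv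
        exact reach_restrict hxu ((reach_symm hxu).trans hxv)
    have hc1 := hcompconn e.1 he1V
    have hc2 := hcompconn e.2 he2V
    have hn1 : V1.Nonempty := ⟨e.1, Finset.mem_filter.mpr ⟨he1V, Relation.ReflTransGen.refl⟩⟩
    have hn2 : V2.Nonempty := ⟨e.2, Finset.mem_filter.mpr ⟨he2V, Relation.ReflTransGen.refl⟩⟩
    have hE1s : E1 ⊆ E' := Finset.filter_subset _ _
    have hE2s : E2 ⊆ E' := Finset.filter_subset _ _
    have hE'c : E'.card < E.card := Finset.card_lt_card (Finset.erase_ssubset he)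
    have hacyc1 : ∀ g ∈ E1, ¬ reachP (E1.erase g) g.1 g.2 := by
      intro g hg hr
      exact hacyc g (Finset.mem_of_mem_erase (hE1s hg))
        (reach_mono (fun x hx => Finset.mem_erase.mpr
          ⟨(Finset.mem_erase.mp hx).1,
           Finset.mem_of_mem_erase (hE1s (Finset.mem_erase.mp hx).2)⟩) hr)
    have hacyc2 : ∀ g ∈ E2, ¬ reachP (E2.erase g) g.1 g.2 := by
      intro g hg hr
      exact hacyc g (Finset.mem_of_mem_erase (hE2s hg))
        (reach_mono (fun x hx => Finset.mem_erase.mpr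
          ⟨(Finset.mem_erase.mp hx).1,
           Finset.mem_of_mem_erase (hE2s (Finset.mem_erase.mp hx).2)⟩) hr)
    have h1 := ih E1.card (lt_of_le_of_lt (Finset.card_le_card hE1s) hE'c) V1 E1 rfl hc1 hn1 hacyc1
    have h2 := ih E2.card (lt_of_le_of_lt (Finset.card_le_card hE2s) hE'c) V2 E2 rfl hc2 hn2 hacyc2
    have hdisjE : Disjoint E1 E2 := by
      rw [Finset.disjoint_left]
      intro g hg1 hg2
      exact hne ((Finset.mem_filter.mp hg1).2.trans (reach_symm (Finset.mem_filter.mp hg2).2))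
    have hEun : E1 ∪ E2 = E' := by
      apply Finset.Subset.antisymm (Finset.union_subset hE1s hE2s)
      intro g hg
      have hgE : g ∈ E := Finset.mem_of_mem_erase hg
      have hg1V : g.1 ∈ V := (hc.1 g hgE).1
      rcases hV12 g.1 hg1V with h | h
      · exact Finset.mem_union_left _ (Finset.mem_filter.mpr ⟨hg, (Finset.mem_filter.mp h).2⟩)
      · exact Finset.mem_union_right _ (Finset.mem_filter.mpr ⟨hg, (Finset.mem_filter.mp h).2⟩)
    have hEc : E1.card + E2.card = E'.card := by
      rw [← Finset.card_union_of_disjoint hdisjE, hEun]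
    have hVc : V1.card + V2.card = V.card := by
      rw [← Finset.card_union_of_disjoint hdisj12, hVun]
    have hE'card : E'.card + 1 = E.card := by
      rw [hE', Finset.card_erase_of_mem he]
      have : 0 < E.card := Finset.card_pos.mpr ⟨e, he⟩
      omega
    omega

theorem exists_spanning_tree {V : Finset ℕ} {A : Finset PEdge}
    (hc : connP V A) (hV : V.Nonempty) : ∃ T ⊆ A, IsTreeOn V T := by
  suffices H : ∀ n (A : Finset PEdge), A.card = n → connP V A →
      ∃ T ⊆ A, IsTreeOn V T from H _ A rfl hc
  clear hc A
  intro n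
  induction n using Nat.strong_induction_on with
  | _ n ih =>
  intro A hn hc
  subst hn
  by_cases hcyc : ∃ e ∈ A, reachP (A.erase e) e.1 e.2
  · obtain ⟨e, he, hd⟩ := hcyc
    obtain ⟨T, hT1, hT2⟩ := ih (A.erase e).card
      (Finset.card_lt_card (Finset.erase_ssubset he)) (A.erase e) rfl (connP_erase hc hd)
    exact ⟨T, hT1.trans (Finset.erase_subset _ _), hT2⟩
  · push_neg at hcyc
    exact ⟨A, Finset.Subset.refl _, hc, acyclic_conn_card hc hV hcyc⟩

/-- tree exchange: replacing an essential edge by a reconnecting edge yields a tree. -/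
theorem swap_tree {V : Finset ℕ} {T : Finset PEdge} {e f : PEdge}
    (hT : IsTreeOn V T) (he : e ∈ T) (hf1 : f.1 ∈ V) (hf2 : f.2 ∈ V)
    (hness : ¬ reachP (T.erase e) f.1 f.2) (hfT : f ∉ T) :
    IsTreeOn V (insert f (T.erase e)) := by
  have hcard : (insert f (T.erase e)).card = T.card := by
    rw [Finset.card_insert_of_notMem (fun h => hfT (Finset.mem_of_mem_erase h)),
      Finset.card_erase_of_mem he]
    have : 0 < T.card := Finset.card_pos.mpr ⟨e, he⟩
    omega
  have hsub : T.erase e ⊆ insert f (T.erase e) := Finset.subset_insert _ _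
  have hfr : reachP T f.1 f.2 := hT.1.2 f.1 hf1 f.2 hf2
  have hee : reachP (insert f (T.erase e)) e.1 e.2 := by
    have hfi : adjP (insert f (T.erase e)) f.1 f.2 := Or.inl (Finset.mem_insert_self _ _)
    rcases reach_erase_decomp (e := e) hfr with h | ⟨h, h'⟩ | ⟨h, h'⟩
    · exact absurd h hness
    · exact ((reach_symm (reach_mono hsub h)).trans (reach_adj hfi)).trans
        (reach_symm (reach_mono hsub h'))
    · exact ((reach_mono hsub h').trans (reach_symm (reach_adj hfi))).trans
        (reach_mono hsub h)
  constructor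
  constructor
  · intro g hg
    rcases Finset.mem_insert.mp hg with rfl | hg
    · exact ⟨hf1, hf2⟩
    · exact hT.1.1 g (Finset.mem_of_mem_erase hg)
  · intro u hu v hv
    have := hT.1.2 u hu v hv
    rcases reach_erase_decomp (e := e) this with h | ⟨h, h'⟩ | ⟨h, h'⟩
    · exact reach_mono hsub h
    · exact ((reach_mono hsub h).trans hee).trans (reach_mono hsub h')
    · exact ((reach_mono hsub h).trans (reach_symm hee)).trans (reach_mono hsub h')
  · rw [hcard]; exact hT.2

/-- property of the maximal spanning tree: every non-tree edge is externally active. -/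
def GoodTree (V : Finset ℕ) (A : Finset PEdge) (ω : PEdge → ℝ) (T : Finset PEdge) : Prop :=
  T ⊆ A ∧ IsTreeOn V T ∧ ∀ f ∈ A, f ∉ T → extActiveP T ω f

theorem exists_good_tree {V : Finset ℕ} {A : Finset PEdge} {ω : PEdge → ℝ}
    (hc : connP V A) (hV : V.Nonempty) (hω : Set.InjOn ω A) :
    ∃ T, GoodTree V A ω T := by
  -- maximal-weight spanning tree
  have hne : (A.powerset.filter (fun T => IsTreeOn V T)).Nonempty := by
    obtain ⟨T, hT1, hT2⟩ := exists_spanning_tree hc hV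
    exact ⟨T, Finset.mem_filter.mpr ⟨Finset.mem_powerset.mpr hT1, hT2⟩⟩
  obtain ⟨T, hTmem, hTmax⟩ := Finset.exists_max_image _ (fun T => ∑ g ∈ T, ω g) hne
  obtain ⟨hTA, hTtree⟩ : T ⊆ A ∧ IsTreeOn V T := by
    have := Finset.mem_filter.mp hTmem
    exact ⟨Finset.mem_powerset.mp this.1, this.2⟩
  refine ⟨T, hTA, hTtree, ?_⟩
  intro f hf hfT
  have hf1V : f.1 ∈ V := (hc.1 f hf).1
  have hf2V : f.2 ∈ V := (hc.1 f hf).2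
  refine ⟨hfT, hTtree.1.2 f.1 hf1V f.2 hf2V, ?_⟩
  intro e' he' hness
  by_contra hle
  push_neg at hle
  have hne' : ω e' ≠ ω f := fun h => hfT (by
    have := hω (hTA he') hf h; rwa [← this])
  have hlt : ω e' < ω f := lt_of_le_of_ne hle hne'
  -- swap
  have hT' := swap_tree hTtree he' hf1V hf2V hness hfT
  have hT'A : insert f (T.erase e') ⊆ A := by
    intro g hg
    rcases Finset.mem_insert.mp hg with rfl | hg
    · exact hf
    · exact hTA (Finset.mem_of_mem_erase hg)
  have hmem' : insert f (T.erase e') ∈ A.powerset.filter (fun T => IsTreeOn V T) :=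
    Finset.mem_filter.mpr ⟨Finset.mem_powerset.mpr hT'A, hT'⟩
  have hsum := hTmax _ hmem'
  have hfe : f ∉ T.erase e' := fun h => hfT (Finset.mem_of_mem_erase h)
  rw [Finset.sum_insert hfe] at hsum
  have herase : ∑ g ∈ T.erase e', ω g = (∑ g ∈ T, ω g) - ω e' := by
    rw [← Finset.add_sum_erase T ω he']; ring
  rw [herase] at hsum
  linarith

theorem good_tree_unique {V : Finset ℕ} {A : Finset PEdge} {ω : PEdge → ℝ}
    {T1 T2 : Finset PEdge}
    (hloop : ∀ g ∈ A, g.1 ≠ g.2)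
    (h1 : GoodTree V A ω T1) (h2 : GoodTree V A ω T2) : T1 = T2 := by
  by_contra hne
  obtain ⟨hT1A, hT1tree, hprop1⟩ := h1
  obtain ⟨hT2A, hT2tree, hprop2⟩ := h2
  have hd12 : (T1 \ T2).Nonempty := by
    rcases Finset.eq_empty_or_nonempty (T1 \ T2) with h | h
    · have hsub : T1 ⊆ T2 := by
        intro g hg
        by_contra hg2
        exact absurd (Finset.mem_sdiff.mpr ⟨hg, hg2⟩) (by simp [h])
      have : T1 = T2 := Finset.eq_of_subset_of_card_le hsub (by
        have := hT1tree.2; have := hT2tree.2; omega)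
      exact absurd this hne
    · exact h
  obtain ⟨f, hfmem, hfmax⟩ := Finset.exists_max_image _ ω hd12
  obtain ⟨hfT1, hfT2⟩ := Finset.mem_sdiff.mp hfmem
  have hfA : f ∈ A := hT1A hfT1
  -- minimal connector of f's endpoints inside T2
  have hf1V : f.1 ∈ V := (hT1tree.1.1 f hfT1).1
  have hf2V : f.2 ∈ V := (hT1tree.1.1 f hfT1).2
  have hr2 : reachP T2 f.1 f.2 := hT2tree.1.2 f.1 hf1V f.2 hf2V
  obtain ⟨S, hSsub, hSr, hSmin⟩ := exists_min_connector hr2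
  have hT2acyc := tree_acyclic hT2tree
  have hSess : ∀ g ∈ S, ¬ reachP (T2.erase g) f.1 f.2 := fun g hg =>
    connector_essential hT2acyc hSsub hSmin hSr hg
  have hSgt : ∀ g ∈ S, ω f < ω g := by
    intro g hg
    exact (hprop2 f hfA hfT2).2.2 g (hSsub hg) (hSess g hg)
  have hSne : S.Nonempty := by
    rcases Finset.eq_empty_or_nonempty S with rfl | h
    · exact absurd (reach_empty hSr) (hloop f hfA)
    · exact h
  have hfS : f ∉ S := fun h => lt_irrefl _ (hSgt f h)
  -- there is an edge of S outside T1
  have hST1 : ∃ e ∈ S, e ∉ T1 := by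
    by_contra hcon
    push_neg at hcon
    have hsub : S ⊆ T1.erase f := fun g hg => Finset.mem_erase.mpr
      ⟨fun h => hfS (h ▸ hg), hcon g hg⟩
    exact tree_acyclic hT1tree f hfT1 (reach_mono hsub hSr)
  obtain ⟨e, heS, heT1⟩ := hST1
  have heT2 : e ∈ T2 := hSsub heS
  have heA : e ∈ A := hT2A heT2
  have hef : ω f < ω e := hSgt e heS
  -- minimal connector of e's endpoints inside T1
  have he1V : e.1 ∈ V := (hT2tree.1.1 e heT2).1
  have he2V : e.2 ∈ V := (hT2tree.1.1 e heT2).2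
  have hr1 : reachP T1 e.1 e.2 := hT1tree.1.2 e.1 he1V e.2 he2V
  obtain ⟨S', hS'sub, hS'r, hS'min⟩ := exists_min_connector hr1
  have hT1acyc := tree_acyclic hT1tree
  have hS'gt : ∀ g ∈ S', ω e < ω g := by
    intro g hg
    exact (hprop1 e heA heT1).2.2 g (hS'sub hg)
      (connector_essential hT1acyc hS'sub hS'min hS'r hg)
  have hS'T2 : S' ⊆ T2 := by
    intro g hg
    by_contra hgT2
    have : g ∈ T1 \ T2 := Finset.mem_sdiff.mpr ⟨hS'sub hg, hgT2⟩
    have := hfmax g this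
    have := hS'gt g hg
    linarith
  have heS' : e ∉ S' := fun h => lt_irrefl _ (hS'gt e h)
  have hsub : S' ⊆ T2.erase e := fun g hg => Finset.mem_erase.mpr
    ⟨fun h => heS' (h ▸ hg), hS'T2 hg⟩
  exact hT2acyc e heT2 (reach_mono hsub hS'r)

theorem sum_pow_powerset (X : Finset PEdge) (z : ℤ) :
    ∑ S ∈ X.powerset, z ^ S.card = (z + 1) ^ X.card := by
  have := Finset.sum_pow_mul_eq_add_pow z 1 X
  simpa using this

/-- the spanning-tree expansion of `T(1,y)` equals the connected-subgraph expansion. -/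
theorem TcP_eq_R {V : Finset ℕ} {E : Finset PEdge} {ω : PEdge → ℝ} {y : ℤ}
    (hEV : ∀ g ∈ E, g.1 ∈ V ∧ g.2 ∈ V)
    (hloop : ∀ g ∈ E, g.1 ≠ g.2)
    (hω : Set.InjOn ω E) (hV : V.Nonempty) :
    TcP V E ω y =
      ∑ A ∈ E.powerset.filter (fun A => connP V A), (y - 1) ^ (A.card + 1 - V.card) := by
  by_cases hconn : connP V E
  · rw [TcP, if_pos hconn]
    -- the canonical tree of a connected spanning subgraph
    classical
    set φ : Finset PEdge → Finset PEdge := fun A =>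
      if h : ∃ T, GoodTree V A ω T then h.choose else ∅ with hφ
    have hφspec : ∀ A ∈ E.powerset.filter (fun A => connP V A), GoodTree V A ω (φ A) := by
      intro A hA
      obtain ⟨hAE, hAc⟩ := Finset.mem_filter.mp hA
      have hAE' : A ⊆ E := Finset.mem_powerset.mp hAE
      have hex : ∃ T, GoodTree V A ω T :=
        exists_good_tree hAc hV (hω.mono (fun x hx => hAE' hx))
      rw [hφ]; simp only [dif_pos hex]; exact hex.choose_spec
    have hmapsto : ∀ A ∈ E.powerset.filter (fun A => connP V A),
        φ A ∈ E.powerset.filter (fun T => IsTreeOn V T) := by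
      intro A hA
      obtain ⟨hφA, hφtree, _⟩ := hφspec A hA
      obtain ⟨hAE, _⟩ := Finset.mem_filter.mp hA
      exact Finset.mem_filter.mpr ⟨Finset.mem_powerset.mpr
        (hφA.trans (Finset.mem_powerset.mp hAE)), hφtree⟩
    rw [← Finset.sum_fiberwise_of_maps_to hmapsto]
    refine Finset.sum_congr rfl ?_
    intro T hT
    obtain ⟨hTE, hTtree⟩ : T ⊆ E ∧ IsTreeOn V T := by
      have := Finset.mem_filter.mp hT
      exact ⟨Finset.mem_powerset.mp this.1, this.2⟩
    set Ext := E.filter (extActiveP T ω) with hExt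
    have hExtT : ∀ g ∈ Ext, g ∉ T := fun g hg => (Finset.mem_filter.mp hg).2.1
    -- the fiber over T is the image of the powerset of Ext
    have hfiber : (E.powerset.filter (fun A => connP V A)).filter (fun A => φ A = T)
        = Ext.powerset.image (fun S => T ∪ S) := by
      apply Finset.Subset.antisymm
      · intro A hA
        obtain ⟨hA1, hA2⟩ := Finset.mem_filter.mp hA
        obtain ⟨hφA, hφtree, hφprop⟩ := hφspec A hA1
        rw [hA2] at hφA hφtree hφprop
        refine Finset.mem_image.mpr ⟨A \ T, Finset.mem_powerset.mpr ?_, ?_⟩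
        · intro g hg
          obtain ⟨hgA, hgT⟩ := Finset.mem_sdiff.mp hg
          exact Finset.mem_filter.mpr
            ⟨Finset.mem_powerset.mp (Finset.mem_filter.mp hA1).1 hgA, hφprop g hgA hgT⟩
        · rw [Finset.union_sdiff_of_subset hφA]
      · intro A hA
        obtain ⟨S, hS, rfl⟩ := Finset.mem_image.mp hA
        have hSExt : S ⊆ Ext := Finset.mem_powerset.mp hS
        have hTS_E : T ∪ S ⊆ E :=
          Finset.union_subset hTE (hSExt.trans (Finset.filter_subset _ _))
        have hconnA : connP V (T ∪ S) := by
          constructor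
          · intro g hg; exact hEV g (hTS_E hg)
          · intro u hu v hv
            exact reach_mono (Finset.subset_union_left) (hTtree.1.2 u hu v hv)
        have hmem : T ∪ S ∈ E.powerset.filter (fun A => connP V A) :=
          Finset.mem_filter.mpr ⟨Finset.mem_powerset.mpr hTS_E, hconnA⟩
        refine Finset.mem_filter.mpr ⟨hmem, ?_⟩
        -- uniqueness: φ (T ∪ S) = T
        have hgood : GoodTree V (T ∪ S) ω T := by
          refine ⟨Finset.subset_union_left, hTtree, ?_⟩
          intro f hf hfT
          rcases Finset.mem_union.mp hf with h | h
          · exact absurd h hfT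
          · exact (Finset.mem_filter.mp (hSExt h)).2
        exact good_tree_unique (fun g hg => hloop g (hTS_E hg)) (hφspec _ hmem) hgood
    rw [hfiber, Finset.sum_image ?inj]
    case inj =>
      intro S1 hS1 S2 hS2 h
      have key : ∀ S, S ∈ Ext.powerset → S = (T ∪ S) \ T := by
        intro S hS
        have hSExt : S ⊆ Ext := Finset.mem_powerset.mp hS
        ext g
        simp only [Finset.mem_sdiff, Finset.mem_union]
        constructor
        · intro hg; exact ⟨Or.inr hg, hExtT g (hSExt hg)⟩
        · rintro ⟨h | h, hgT⟩
          · exact absurd h hgT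
          · exact h
      rw [key S1 hS1, key S2 hS2, show T ∪ S1 = T ∪ S2 from h]
    have hcards : ∀ S ∈ Ext.powerset, (T ∪ S).card + 1 - V.card = S.card := by
      intro S hS
      have hSExt : S ⊆ Ext := Finset.mem_powerset.mp hS
      have hdisj : Disjoint T S := by
        rw [Finset.disjoint_right]
        intro a ha
        exact hExtT _ (hSExt ha)
      rw [Finset.card_union_of_disjoint hdisj]
      have := hTtree.2
      omega
    rw [Finset.sum_congr rfl (fun S hS => by rw [hcards S hS])]
    rw [sum_pow_powerset, eaP]
    ring_nf
    rfl
  · rw [TcP, if_neg hconn]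
    have : E.powerset.filter (fun A => connP V A) = ∅ := by
      rw [Finset.filter_eq_empty_iff]
      intro A hA hAc
      exact hconn ⟨hEV, fun u hu v hv =>
        reach_mono (Finset.mem_powerset.mp hA) (hAc.2 u hu v hv)⟩
    rw [this, Finset.sum_empty]

theorem reach_map {A : Finset PEdge} (σ : ℕ → ℕ) {u v : ℕ} (h : reachP A u v) :
    reachP (A.image fun g => (σ g.1, σ g.2)) (σ u) (σ v) := by
  induction h with
  | refl => exact Relation.ReflTransGen.refl
  | @tail b c h1 h2 ih =>
    refine ih.tail ?_
    rcases h2 with h | h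
    · exact Or.inl (Finset.mem_image.mpr ⟨(b, c), h, rfl⟩)
    · exact Or.inr (Finset.mem_image.mpr ⟨(c, b), h, rfl⟩)

/-- mapping a walk through a vertex map that collapses the endpoints of `e₀`. -/
theorem reach_map_erase {A : Finset PEdge} {e₀ : PEdge} (σ : ℕ → ℕ)
    (hcol : σ e₀.1 = σ e₀.2) {u v : ℕ} (h : reachP A u v) :
    reachP ((A.erase e₀).image fun g => (σ g.1, σ g.2)) (σ u) (σ v) := by
  induction h with
  | refl => exact Relation.ReflTransGen.refl
  | @tail b c h1 h2 ih =>
    have key : ∀ g : PEdge, g ∈ A → ((b, c) = g ∨ (c, b) = g) →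
        reachP ((A.erase e₀).image fun g => (σ g.1, σ g.2)) (σ b) (σ c) := by
      intro g hg hbc
      by_cases hge : g = e₀
      · subst hge
        rcases hbc with h | h
        · have hb : σ b = σ c := by rw [← h] at hcol; exact hcol
          rw [hb]; exact Relation.ReflTransGen.refl
        · have hb : σ c = σ b := by rw [← h] at hcol; exact hcol
          rw [← hb]; exact Relation.ReflTransGen.refl
      · have hmem : g ∈ A.erase e₀ := Finset.mem_erase.mpr ⟨hge, hg⟩
        rcases hbc with h | h
        · exact reach_adj (Or.inl (Finset.mem_image.mpr ⟨g, hmem, by rw [← h]⟩))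
        · exact reach_adj (Or.inr (Finset.mem_image.mpr ⟨g, hmem, by rw [← h]⟩))
    refine ih.trans ?_
    rcases h2 with h | h
    · exact key (b, c) h (Or.inl rfl)
    · exact key (c, b) h (Or.inr rfl)

/-- lifting walks along a family of endpoint-connections. -/
theorem reach_of_all_edges {A' B : Finset PEdge}
    (H : ∀ h ∈ B, reachP A' h.1 h.2) {u v : ℕ} (h : reachP B u v) : reachP A' u v := by
  induction h with
  | refl => exact Relation.ReflTransGen.refl
  | @tail b c h1 h2 ih =>
    refine ih.trans ?_
    rcases h2 with h | h
    · exact H (b, c) h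
    · exact reach_symm (H (c, b) h)

theorem mem_ctE2 {A B : Finset ℕ} {e : PEdge} :
    e ∈ ctE2 A B ↔ e.1 ∈ A ∧ e.2 ∈ B ∧ e.1 < e.2 := by
  simp [ctE2, Finset.mem_filter, Finset.mem_product, and_assoc]

theorem omegaLex_injOn {n : ℕ} {E : Finset PEdge} (hE : ∀ g ∈ E, g.2 ≤ n) :
    Set.InjOn (omegaLex n) E := by
  intro a ha b hb hab
  have ha2 : a.2 ≤ n := hE a ha
  have hb2 : b.2 ≤ n := hE b hb
  have : (a.1 * (n + 1) + a.2 : ℕ) = b.1 * (n + 1) + b.2 := by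
    have := hab
    rw [omegaLex, omegaLex] at this
    exact_mod_cast this
  have h2 : a.2 = b.2 := by
    have h1 := congrArg (· % (n + 1)) this
    simpa [Nat.mul_add_mod_of_lt (by omega : a.2 < n + 1),
      Nat.mul_add_mod_of_lt (by omega : b.2 < n + 1)] using h1
  have h1 : a.1 = b.1 := by
    have : a.1 * (n + 1) = b.1 * (n + 1) := by omega
    exact Nat.eq_of_mul_eq_mul_right (by omega) this
  exact Prod.ext h1 h2

/-- for `r ∈ [n+1]` and a partition `{U1,U2}` of `[n+2] \ {r,r+1}`,
`T^c_{CT(U1,{r},U2)}(y) = T^c_{CT(U1∪{r},U2∪{r+1})}(y) − T^c_{CT(U1∪{r+1},U2∪{r})}(y)`,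
where `T^c_G(y) = T_G(1,y)` if `G` is connected and `0` otherwise. -/
theorem stmt16 (n r : ℕ) (hr : r ∈ Finset.Icc 1 (n + 1)) (U1 U2 : Finset ℕ)
    (h1 : U1.Nonempty) (h2 : U2.Nonempty) (hdisj : Disjoint U1 U2)
    (hcover : U1 ∪ U2 = Finset.Icc 1 (n + 2) \ {r, r + 1}) (y : ℤ) :
    TcP (U1 ∪ {r} ∪ U2) (ctE2 U1 {r} ∪ ctE2 U1 U2 ∪ ctE2 {r} U2) (omegaLex (n + 2)) y
      = TcP (Finset.Icc 1 (n + 2)) (ctE2 (U1 ∪ {r}) (U2 ∪ {r + 1})) (omegaLex (n + 2)) y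
        - TcP (Finset.Icc 1 (n + 2)) (ctE2 (U1 ∪ {r + 1}) (U2 ∪ {r})) (omegaLex (n + 2)) y := by
  have hrr : 1 ≤ r ∧ r ≤ n + 1 := by simpa [Finset.mem_Icc] using hr
  set V : Finset ℕ := Finset.Icc 1 (n + 2) with hV
  set ω : PEdge → ℝ := omegaLex (n + 2) with hω
  set e₀ : PEdge := (r, r + 1) with he₀
  set EG : Finset PEdge := ctE2 (U1 ∪ {r}) (U2 ∪ {r + 1}) with hEG
  set EG' : Finset PEdge := ctE2 (U1 ∪ {r + 1}) (U2 ∪ {r}) with hEG'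
  set EL : Finset PEdge := ctE2 U1 {r} ∪ ctE2 U1 U2 ∪ ctE2 {r} U2 with hEL
  set VL : Finset ℕ := U1 ∪ {r} ∪ U2 with hVL
  -- basic membership facts
  have hU1mem : ∀ x ∈ U1, 1 ≤ x ∧ x ≤ n + 2 ∧ x ≠ r ∧ x ≠ r + 1 := by
    intro x hx
    have : x ∈ U1 ∪ U2 := Finset.mem_union_left _ hx
    rw [hcover] at this
    simp only [hV, Finset.mem_sdiff, Finset.mem_Icc, Finset.mem_insert, Finset.mem_singleton] at this
    push_neg at this
    omega
  have hU2mem : ∀ x ∈ U2, 1 ≤ x ∧ x ≤ n + 2 ∧ x ≠ r ∧ x ≠ r + 1 := by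
    intro x hx
    have : x ∈ U1 ∪ U2 := Finset.mem_union_right _ hx
    rw [hcover] at this
    simp only [hV, Finset.mem_sdiff, Finset.mem_Icc, Finset.mem_insert, Finset.mem_singleton] at this
    push_neg at this
    omega
  have hmemV : ∀ x, x ∈ V ↔ 1 ≤ x ∧ x ≤ n + 2 := by intro x; simp [hV, Finset.mem_Icc]
  have hmemVL : ∀ x, x ∈ VL ↔ x ∈ U1 ∨ x = r ∨ x ∈ U2 := by
    intro x; simp [hVL, Finset.mem_union, Finset.mem_singleton, or_assoc]; tauto
  have hU1U2 : ∀ x, 1 ≤ x → x ≤ n + 2 → x ≠ r → x ≠ r + 1 → x ∈ U1 ∨ x ∈ U2 := by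
    intro x h1x h2x h3x h4x
    have : x ∈ U1 ∪ U2 := by
      rw [hcover]
      simp only [hV, Finset.mem_sdiff, Finset.mem_Icc, Finset.mem_insert, Finset.mem_singleton]
      exact ⟨⟨h1x, h2x⟩, by push_neg; exact ⟨h3x, h4x⟩⟩
    simpa [Finset.mem_union] using this
  have hVLV : ∀ x ∈ VL, x ∈ V := by
    intro x hx
    rcases (hmemVL x).mp hx with h | h | h
    · have := hU1mem x h; rw [hmemV]; omega
    · rw [hmemV]; omega
    · have := hU2mem x h; rw [hmemV]; omega
  have hr1VL : r + 1 ∉ VL := by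
    rw [hmemVL]
    rintro (h | h | h)
    · exact (hU1mem _ h).2.2.2 rfl
    · omega
    · exact (hU2mem _ h).2.2.2 rfl
  have hVmemVL : ∀ x ∈ V, x ≠ r + 1 → x ∈ VL := by
    intro x hx hne
    rw [hmemV] at hx
    by_cases hxr : x = r
    · rw [hmemVL]; omega
    · rcases hU1U2 x hx.1 hx.2 hxr hne with h | h <;> rw [hmemVL] <;> tauto
  have hVcard : V.card = VL.card + 1 := by
    have hins : insert (r + 1) VL = V := by
      ext x
      simp only [Finset.mem_insert]
      constructor
      · rintro (rfl | h)
        · rw [hmemV]; omega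
        · exact hVLV x h
      · intro hx
        by_cases hxe : x = r + 1
        · exact Or.inl hxe
        · exact Or.inr (hVmemVL x hx hxe)
    rw [← hins, Finset.card_insert_of_notMem hr1VL]
  -- membership of the three edge sets
  have hmemEG : ∀ g : PEdge, g ∈ EG ↔
      (g.1 ∈ U1 ∨ g.1 = r) ∧ (g.2 ∈ U2 ∨ g.2 = r + 1) ∧ g.1 < g.2 := by
    intro g; simp [hEG, mem_ctE2, Finset.mem_union, Finset.mem_singleton]; tauto
  have hmemEG' : ∀ g : PEdge, g ∈ EG' ↔
      (g.1 ∈ U1 ∨ g.1 = r + 1) ∧ (g.2 ∈ U2 ∨ g.2 = r) ∧ g.1 < g.2 := by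
    intro g; simp [hEG', mem_ctE2, Finset.mem_union, Finset.mem_singleton]; tauto
  have hmemEL : ∀ g : PEdge, g ∈ EL ↔
      (g.1 ∈ U1 ∧ g.2 = r ∧ g.1 < g.2) ∨ (g.1 ∈ U1 ∧ g.2 ∈ U2 ∧ g.1 < g.2) ∨
        (g.1 = r ∧ g.2 ∈ U2 ∧ g.1 < g.2) := by
    intro g; simp [hEL, mem_ctE2, Finset.mem_union, Finset.mem_singleton]
  have hEGV : ∀ g ∈ EG, g.1 ∈ V ∧ g.2 ∈ V := by
    intro g hg
    rw [hmemEG] at hg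
    constructor <;> rw [hmemV]
    · rcases hg.1 with h | h
      · have := hU1mem _ h; omega
      · omega
    · rcases hg.2.1 with h | h
      · have := hU2mem _ h; omega
      · omega
  have hEG'V : ∀ g ∈ EG', g.1 ∈ V ∧ g.2 ∈ V := by
    intro g hg
    rw [hmemEG'] at hg
    constructor <;> rw [hmemV]
    · rcases hg.1 with h | h
      · have := hU1mem _ h; omega
      · omega
    · rcases hg.2.1 with h | h
      · have := hU2mem _ h; omega
      · omega
  have hELVL : ∀ g ∈ EL, g.1 ∈ VL ∧ g.2 ∈ VL := by
    intro g hg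
    rw [hmemEL] at hg
    constructor <;> rw [hmemVL] <;> tauto
  have hE0G : e₀ ∈ EG := by
    rw [hmemEG]
    refine ⟨Or.inr rfl, Or.inr rfl, ?_⟩
    show r < r + 1
    omega
  have hVne : V.Nonempty := ⟨1, by rw [hmemV]; omega⟩
  have hVLne : VL.Nonempty := ⟨r, by rw [hmemVL]; exact Or.inr (Or.inl rfl)⟩
  -- injectivity of the edge order
  have hωG : Set.InjOn ω EG := by
    apply omegaLex_injOn
    intro g hg
    rw [hmemEG] at hg
    rcases hg.2.1 with h | h
    · have := hU2mem _ h; omega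
    · omega
  have hωG' : Set.InjOn ω EG' := by
    apply omegaLex_injOn
    intro g hg
    rw [hmemEG'] at hg
    rcases hg.2.1 with h | h
    · have := hU2mem _ h; omega
    · omega
  have hωL : Set.InjOn ω EL := by
    apply omegaLex_injOn
    intro g hg
    rw [hmemEL] at hg
    rcases hg with h | h | h
    · omega
    · have := hU2mem _ h.2.1; omega
    · have := hU2mem _ h.2.1; omega
  have hloopG : ∀ g ∈ EG, g.1 ≠ g.2 := by
    intro g hg; rw [hmemEG] at hg; omega
  have hloopG' : ∀ g ∈ EG', g.1 ≠ g.2 := by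
    intro g hg; rw [hmemEG'] at hg; omega
  have hloopL : ∀ g ∈ EL, g.1 ≠ g.2 := by
    intro g hg; rw [hmemEL] at hg; omega
  -- rewrite the three `TcP`s as connected-subgraph sums
  rw [TcP_eq_R hEGV hloopG hωG hVne, TcP_eq_R hEG'V hloopG' hωG' hVne,
    TcP_eq_R hELVL hloopL hωL hVLne]
  -- split the big sum according to whether `e₀` is used
  rw [← Finset.sum_filter_add_sum_filter_not (EG.powerset.filter fun A => connP V A)
    (fun A => e₀ ∈ A)]
  -- Bijection (i): subgraphs avoiding `e₀` ↔ subgraphs of the swapped graph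
  have hbij1 :
      ∑ A ∈ (EG.powerset.filter fun A => connP V A).filter (fun A => ¬ e₀ ∈ A),
        (y - 1) ^ (A.card + 1 - V.card)
        = ∑ A ∈ EG'.powerset.filter fun A => connP V A,
            (y - 1) ^ (A.card + 1 - V.card) := by
    set σ : ℕ → ℕ := fun x => if x = r then r + 1 else if x = r + 1 then r else x with hσdef
    set F : PEdge → PEdge := fun g => (σ g.1, σ g.2) with hFdef
    have hσr : σ r = r + 1 := by
      show (if r = r then r + 1 else if r = r + 1 then r else r) = r + 1
      rw [if_pos rfl]
    have hσr1 : σ (r + 1) = r := by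
      show (if r + 1 = r then r + 1 else if r + 1 = r + 1 then r else r + 1) = r
      rw [if_neg (by omega), if_pos rfl]
    have hσfix : ∀ x, x ≠ r → x ≠ r + 1 → σ x = x := by
      intro x hx1 hx2
      show (if x = r then r + 1 else if x = r + 1 then r else x) = x
      rw [if_neg hx1, if_neg hx2]
    have hσσ : ∀ x, σ (σ x) = x := by
      intro x
      by_cases hx1 : x = r
      · subst hx1; rw [hσr, hσr1]
      · by_cases hx2 : x = r + 1
        · subst hx2; rw [hσr1, hσr]
        · rw [hσfix x hx1 hx2, hσfix x hx1 hx2]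
    have hFF : ∀ g : PEdge, F (F g) = g := by
      intro g
      simp only [hFdef, hσσ]
    have hFinj : Function.Injective F := Function.LeftInverse.injective hFF
    have hσV : ∀ x ∈ V, σ x ∈ V := by
      intro x hx
      by_cases hx1 : x = r
      · rw [hx1, hσr, hmemV]; omega
      · by_cases hx2 : x = r + 1
        · rw [hx2, hσr1, hmemV]; omega
        · rwa [hσfix x hx1 hx2]
    have hmapA : ∀ g ∈ EG, g ≠ e₀ → F g ∈ EG' := by
      intro g hg hne
      rw [hmemEG] at hg
      obtain ⟨hg1, hg2, hg3⟩ := hg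
      have hne' : ¬ (g.1 = r ∧ g.2 = r + 1) := by
        intro hcon
        apply hne
        rw [he₀]
        exact Prod.ext hcon.1 hcon.2
      rw [hmemEG']
      rcases hg1 with hc1 | hc1
      · obtain ⟨-, -, h1r, h1r1⟩ := hU1mem _ hc1
        rcases hg2 with hc2 | hc2
        · obtain ⟨-, -, h2r, h2r1⟩ := hU2mem _ hc2
          simp only [hFdef]
          rw [hσfix _ h1r h1r1, hσfix _ h2r h2r1]
          exact ⟨Or.inl hc1, Or.inl hc2, hg3⟩
        · simp only [hFdef]
          rw [hc2, hσr1, hσfix _ h1r h1r1]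
          exact ⟨Or.inl hc1, Or.inr rfl, by omega⟩
      · rcases hg2 with hc2 | hc2
        · obtain ⟨-, -, h2r, h2r1⟩ := hU2mem _ hc2
          simp only [hFdef]
          rw [hc1, hσr, hσfix _ h2r h2r1]
          exact ⟨Or.inr rfl, Or.inl hc2, by omega⟩
        · exact absurd ⟨hc1, hc2⟩ hne'
    have hmapB : ∀ g ∈ EG', F g ∈ EG ∧ F g ≠ e₀ := by
      intro g hg
      rw [hmemEG'] at hg
      obtain ⟨hg1, hg2, hg3⟩ := hg
      rcases hg1 with hc1 | hc1
      · obtain ⟨-, -, h1r, h1r1⟩ := hU1mem _ hc1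
        rcases hg2 with hc2 | hc2
        · obtain ⟨-, -, h2r, h2r1⟩ := hU2mem _ hc2
          constructor
          · rw [hmemEG]
            simp only [hFdef]
            rw [hσfix _ h1r h1r1, hσfix _ h2r h2r1]
            exact ⟨Or.inl hc1, Or.inl hc2, hg3⟩
          · intro hcon
            have := congrArg Prod.fst hcon
            simp only [hFdef, he₀] at this
            rw [hσfix _ h1r h1r1] at this
            exact h1r this
        · constructor
          · rw [hmemEG]
            simp only [hFdef]
            rw [hc2, hσr, hσfix _ h1r h1r1]
            exact ⟨Or.inl hc1, Or.inr rfl, by omega⟩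
          · intro hcon
            have := congrArg Prod.fst hcon
            simp only [hFdef, he₀] at this
            rw [hσfix _ h1r h1r1] at this
            exact h1r this
      · have hc2' : g.2 ∈ U2 := by
          rcases hg2 with hc2 | hc2
          · exact hc2
          · omega
        obtain ⟨-, -, h2r, h2r1⟩ := hU2mem _ hc2'
        constructor
        · rw [hmemEG]
          simp only [hFdef]
          rw [hc1, hσr1, hσfix _ h2r h2r1]
          exact ⟨Or.inr rfl, Or.inl hc2', by omega⟩
        · intro hcon
          have := congrArg Prod.snd hcon
          simp only [hFdef, he₀] at this
          rw [hσfix _ h2r h2r1] at this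
          exact h2r1 this
    have himg : ∀ A : Finset PEdge, (A.image F).image F = A := by
      intro A
      rw [Finset.image_image]
      have h1 : A.image (F ∘ F) = A.image id := Finset.image_congr (fun g _ => hFF g)
      rw [h1, Finset.image_id]
    have hmem_s : ∀ A, A ∈ (EG.powerset.filter fun A => connP V A).filter (fun A => ¬ e₀ ∈ A)
        ↔ A ⊆ EG ∧ connP V A ∧ e₀ ∉ A := by
      intro A
      simp [Finset.mem_filter, Finset.mem_powerset, and_assoc]
    have hmem_t : ∀ A, A ∈ EG'.powerset.filter (fun A => connP V A)
        ↔ A ⊆ EG' ∧ connP V A := by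
      intro A
      simp [Finset.mem_filter, Finset.mem_powerset]
    have hconnF : ∀ A : Finset PEdge, connP V A →
        (∀ g ∈ A.image F, g.1 ∈ V ∧ g.2 ∈ V) → connP V (A.image F) := by
      intro A hA hAV
      refine ⟨hAV, fun u hu v hv => ?_⟩
      have h1 := reach_map σ (hA.2 (σ u) (hσV u hu) (σ v) (hσV v hv))
      rw [hσσ, hσσ] at h1
      rwa [← hFdef] at h1
    refine Finset.sum_nbij' (fun A => A.image F) (fun A => A.image F) ?_ ?_ ?_ ?_ ?_
    · intro A hA
      obtain ⟨hAE, hAc, hA0⟩ := (hmem_s A).mp hA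
      have hsub : A.image F ⊆ EG' := by
        intro g' hg'
        obtain ⟨g, hgA, rfl⟩ := Finset.mem_image.mp hg'
        exact hmapA g (hAE hgA) (fun hcon => hA0 (hcon ▸ hgA))
      exact (hmem_t _).mpr ⟨hsub, hconnF A hAc (fun g hg => hEG'V g (hsub hg))⟩
    · intro B hB
      obtain ⟨hBE, hBc⟩ := (hmem_t B).mp hB
      have hsub : B.image F ⊆ EG := by
        intro g' hg'
        obtain ⟨g, hgB, rfl⟩ := Finset.mem_image.mp hg'
        exact (hmapB g (hBE hgB)).1
      refine (hmem_s _).mpr ⟨hsub, hconnF B hBc (fun g hg => hEGV g (hsub hg)), ?_⟩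
      intro hcon
      obtain ⟨g, hgB, hgE⟩ := Finset.mem_image.mp hcon
      exact (hmapB g (hBE hgB)).2 hgE
    · intro A _; exact himg A
    · intro B _; exact himg B
    · intro A _
      rw [Finset.card_image_of_injective A hFinj]
  -- Bijection (ii): subgraphs using `e₀` ↔ subgraphs of the contracted graph
  have hbij2 :
      ∑ A ∈ (EG.powerset.filter fun A => connP V A).filter (fun A => e₀ ∈ A),
        (y - 1) ^ (A.card + 1 - V.card)
        = ∑ B ∈ EL.powerset.filter fun B => connP VL B,
            (y - 1) ^ (B.card + 1 - VL.card) := by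
    set c : ℕ → ℕ := fun x => if x = r + 1 then r else x with hcdef
    set Fc : PEdge → PEdge := fun g => (c g.1, c g.2) with hFcdef
    set Fc' : PEdge → PEdge := fun g => if g.2 = r then (g.1, r + 1) else g with hFc'def
    have hcr1 : c (r + 1) = r := by
      show (if r + 1 = r + 1 then r else r + 1) = r
      rw [if_pos rfl]
    have hcfix : ∀ x, x ≠ r + 1 → c x = x := by
      intro x hx
      show (if x = r + 1 then r else x) = x
      rw [if_neg hx]
    have hccol : c e₀.1 = c e₀.2 := by
      show c r = c (r + 1)
      rw [hcr1, hcfix r (by omega)]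
    have hFcg : ∀ g : PEdge, Fc g = (c g.1, c g.2) := fun g => rfl
    have hFc'r : ∀ p : PEdge, p.2 = r → Fc' p = (p.1, r + 1) := by
      intro p hp
      show (if p.2 = r then (p.1, r + 1) else p) = (p.1, r + 1)
      rw [if_pos hp]
    have hFc'fix : ∀ p : PEdge, p.2 ≠ r → Fc' p = p := by
      intro p hp
      show (if p.2 = r then (p.1, r + 1) else p) = p
      rw [if_neg hp]
    have hmapA : ∀ g ∈ EG, g ≠ e₀ → Fc g ∈ EL ∧ Fc' (Fc g) = g := by
      intro g hg hne
      rw [hmemEG] at hg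
      obtain ⟨hg1, hg2, hg3⟩ := hg
      have hg1ne : g.1 ≠ r + 1 := by
        rcases hg1 with hh | hh
        · exact (hU1mem _ hh).2.2.2
        · omega
      have hc1 : c g.1 = g.1 := hcfix _ hg1ne
      rcases hg2 with hc2 | hc2
      · -- g.2 ∈ U2
        obtain ⟨-, -, h2r, h2r1⟩ := hU2mem _ hc2
        have hcg : Fc g = g := by
          rw [hFcg, hc1, hcfix _ h2r1]
        rw [hcg, hFc'fix g h2r]
        refine ⟨?_, rfl⟩
        rw [hmemEL]
        rcases hg1 with hh | hh
        · exact Or.inr (Or.inl ⟨hh, hc2, hg3⟩)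
        · exact Or.inr (Or.inr ⟨hh, hc2, hg3⟩)
      · -- g.2 = r + 1
        have hg1r : g.1 ≠ r := by
          intro hcon
          exact hne (Prod.ext hcon hc2)
        have hg1U1 : g.1 ∈ U1 := by
          rcases hg1 with hh | hh
          · exact hh
          · exact absurd hh hg1r
        have hcg : Fc g = (g.1, r) := by
          rw [hFcg, hc1, hc2, hcr1]
        constructor
        · rw [hcg, hmemEL]
          exact Or.inl ⟨hg1U1, rfl, by omega⟩
        · rw [hcg, hFc'r (g.1, r) rfl]
          exact Prod.ext rfl hc2.symm
    have hmapB : ∀ g ∈ EL, Fc' g ∈ EG ∧ Fc' g ≠ e₀ ∧ Fc (Fc' g) = g := by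
      intro g hg
      rw [hmemEL] at hg
      rcases hg with ⟨hh1, hh2, hh3⟩ | ⟨hh1, hh2, hh3⟩ | ⟨hh1, hh2, hh3⟩
      · -- g.1 ∈ U1, g.2 = r
        obtain ⟨-, -, h1r, h1r1⟩ := hU1mem _ hh1
        have heval : Fc' g = (g.1, r + 1) := hFc'r g hh2
        refine ⟨?_, ?_, ?_⟩
        · rw [heval, hmemEG]
          exact ⟨Or.inl hh1, Or.inr rfl, by omega⟩
        · rw [heval]
          intro hcon
          have := congrArg Prod.fst hcon
          rw [he₀] at this
          exact h1r this
        · rw [heval, hFcg, hcfix _ h1r1, hcr1]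
          exact Prod.ext rfl hh2.symm
      · -- g.1 ∈ U1, g.2 ∈ U2
        obtain ⟨-, -, h1r, h1r1⟩ := hU1mem _ hh1
        obtain ⟨-, -, h2r, h2r1⟩ := hU2mem _ hh2
        have heval : Fc' g = g := hFc'fix g h2r
        refine ⟨?_, ?_, ?_⟩
        · rw [heval, hmemEG]
          exact ⟨Or.inl hh1, Or.inl hh2, hh3⟩
        · rw [heval]
          intro hcon
          have := congrArg Prod.fst hcon
          rw [he₀] at this
          exact h1r this
        · rw [heval, hFcg, hcfix _ h1r1, hcfix _ h2r1]
      · -- g.1 = r, g.2 ∈ U2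
        obtain ⟨-, -, h2r, h2r1⟩ := hU2mem _ hh2
        have heval : Fc' g = g := hFc'fix g h2r
        refine ⟨?_, ?_, ?_⟩
        · rw [heval, hmemEG]
          exact ⟨Or.inr hh1, Or.inl hh2, hh3⟩
        · rw [heval]
          intro hcon
          have := congrArg Prod.snd hcon
          rw [he₀] at this
          exact h2r1 this
        · rw [heval, hFcg, hcfix _ (by omega : g.1 ≠ r + 1), hcfix _ h2r1]
    have hmem_s : ∀ A, A ∈ (EG.powerset.filter fun A => connP V A).filter (fun A => e₀ ∈ A)
        ↔ A ⊆ EG ∧ connP V A ∧ e₀ ∈ A := by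
      intro A
      simp [Finset.mem_filter, Finset.mem_powerset, and_assoc]
    have hmem_t : ∀ B, B ∈ EL.powerset.filter (fun B => connP VL B)
        ↔ B ⊆ EL ∧ connP VL B := by
      intro B
      simp [Finset.mem_filter, Finset.mem_powerset]
    refine Finset.sum_nbij' (fun A => (A.erase e₀).image Fc)
      (fun B => insert e₀ (B.image Fc')) ?_ ?_ ?_ ?_ ?_
    · -- forward membership
      intro A hA
      obtain ⟨hAE, hAc, hA0⟩ := (hmem_s A).mp hA
      have hsub : (A.erase e₀).image Fc ⊆ EL := by
        intro g' hg'
        obtain ⟨g, hgA, rfl⟩ := Finset.mem_image.mp hg'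
        obtain ⟨hgne, hgA'⟩ := Finset.mem_erase.mp hgA
        exact (hmapA g (hAE hgA') hgne).1
      refine (hmem_t _).mpr ⟨hsub, fun g hg => hELVL g (hsub hg), ?_⟩
      intro u hu v hv
      have hu' : u ≠ r + 1 := fun hcon => hr1VL (hcon ▸ hu)
      have hv' : v ≠ r + 1 := fun hcon => hr1VL (hcon ▸ hv)
      have h1 := reach_map_erase c hccol (hAc.2 u (hVLV u hu) v (hVLV v hv))
      rw [hcfix u hu', hcfix v hv'] at h1
      rwa [← hFcdef] at h1
    · -- backward membership
      intro B hB
      obtain ⟨hBE, hBc⟩ := (hmem_t B).mp hB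
      have hsub : insert e₀ (B.image Fc') ⊆ EG := by
        intro g' hg'
        rcases Finset.mem_insert.mp hg' with rfl | hg'
        · exact hE0G
        · obtain ⟨g, hgB, rfl⟩ := Finset.mem_image.mp hg'
          exact (hmapB g (hBE hgB)).1
      refine (hmem_s _).mpr ⟨hsub, ⟨fun g hg => hEGV g (hsub hg), ?_⟩,
        Finset.mem_insert_self _ _⟩
      set A' := insert e₀ (B.image Fc') with hA'def
      have hre : reachP A' r (r + 1) := reach_adj (Or.inl (Finset.mem_insert_self e₀ _))
      have hlift : ∀ x y, reachP B x y → reachP A' x y := by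
        intro x y hxy
        refine reach_of_all_edges ?_ hxy
        intro h hh
        have hhEL := hBE hh
        by_cases hh2 : h.2 = r
        · have heval := hFc'r h hh2
          have hmem : (h.1, r + 1) ∈ A' := by
            rw [hA'def]
            refine Finset.mem_insert_of_mem ?_
            rw [← heval]
            exact Finset.mem_image_of_mem _ hh
          have step1 : reachP A' h.1 (r + 1) := reach_adj (Or.inl hmem)
          have step2 : reachP A' (r + 1) h.2 := by
            rw [hh2]
            exact reach_symm hre
          exact step1.trans step2
        · have heval := hFc'fix h hh2
          have hmem : h ∈ A' := by
            rw [hA'def]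
            refine Finset.mem_insert_of_mem ?_
            rw [← heval]
            exact Finset.mem_image_of_mem _ hh
          exact reach_adj (Or.inl (by rwa [← Prod.mk.eta (p := h)] at hmem))
      have hproj : ∀ x ∈ V, reachP A' x (c x) ∧ c x ∈ VL := by
        intro x hx
        by_cases hx1 : x = r + 1
        · subst hx1
          rw [hcr1]
          exact ⟨reach_symm hre, by rw [hmemVL]; exact Or.inr (Or.inl rfl)⟩
        · rw [hcfix x hx1]
          exact ⟨Relation.ReflTransGen.refl, hVmemVL x hx hx1⟩
      intro u hu v hv
      obtain ⟨hru, hcu⟩ := hproj u hu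
      obtain ⟨hrv, hcv⟩ := hproj v hv
      exact (hru.trans (hlift _ _ (hBc.2 (c u) hcu (c v) hcv))).trans (reach_symm hrv)
    · -- left inverse
      intro A hA
      obtain ⟨hAE, hAc, hA0⟩ := (hmem_s A).mp hA
      show insert e₀ (((A.erase e₀).image Fc).image Fc') = A
      rw [Finset.image_image]
      have h1 : (A.erase e₀).image (Fc' ∘ Fc) = (A.erase e₀).image id := by
        refine Finset.image_congr ?_
        intro g hg
        obtain ⟨hgne, hgA'⟩ := Finset.mem_erase.mp hg
        exact (hmapA g (hAE hgA') hgne).2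
      rw [h1, Finset.image_id, Finset.insert_erase hA0]
    · -- right inverse
      intro B hB
      obtain ⟨hBE, hBc⟩ := (hmem_t B).mp hB
      have h0 : e₀ ∉ B.image Fc' := by
        intro hcon
        obtain ⟨g, hgB, hgE⟩ := Finset.mem_image.mp hcon
        exact (hmapB g (hBE hgB)).2.1 hgE
      show ((insert e₀ (B.image Fc')).erase e₀).image Fc = B
      rw [Finset.erase_insert h0, Finset.image_image]
      have h1 : B.image (Fc ∘ Fc') = B.image id := by
        refine Finset.image_congr ?_
        intro g hg
        exact (hmapB g (hBE hg)).2.2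
      rw [h1, Finset.image_id]
    · -- values
      intro A hA
      obtain ⟨hAE, hAc, hA0⟩ := (hmem_s A).mp hA
      have hinj : Set.InjOn Fc (A.erase e₀) := by
        intro a ha b hb hab
        obtain ⟨hane, haA⟩ := Finset.mem_erase.mp ha
        obtain ⟨hbne, hbA⟩ := Finset.mem_erase.mp hb
        have h1 := (hmapA a (hAE haA) hane).2
        have h2 := (hmapA b (hAE hbA) hbne).2
        rw [← h1, ← h2, hab]
      have hcard : ((A.erase e₀).image Fc).card = A.card - 1 := by
        rw [Finset.card_image_of_injOn hinj, Finset.card_erase_of_mem hA0]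
      have hApos : 1 ≤ A.card := Finset.card_pos.mpr ⟨e₀, hA0⟩
      show (y - 1) ^ (A.card + 1 - V.card)
        = (y - 1) ^ (((A.erase e₀).image Fc).card + 1 - VL.card)
      rw [hcard]
      congr 1
      omega
  rw [hbij1, hbij2]
  ring

end
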